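/- In the mixed-measure setting, let f̃ : I → ℝ be measurable and μ-square-integrable with ∫_I f̃ dμ = 0, and let f̃_c(t) = f̃(t) − (1/λ(I)) ∫_C f̃ dλ for t ∈ C, f̃_d(t_d) = f̃(t_d) for d = 1, …, D, and f̃_d(t_{D+1}) = (1/λ(I)) ∫_C f̃ dλ. Then the Pythagoras identity holds: ∫_I f̃^2 dμ = ∫_C f̃_c^2 dλ + Σ_{d=1}^D w_d f̃_d(t_d)^2 + λ(I) · f̃_d(t_{D+1})^2. In particular, the squared L²₀(μ) norm of f̃ is the sum of the squared norms of its continuous component in L²₀(λ) and its discrete component in L²₀(δ•). -/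

import Mathlib

open MeasureTheory
open scoped Classical

/-- The mixed reference measure `μ = Σ_d w_d δ_{t_d} + λ`, where `λ` is Lebesgue measure
restricted to `I`. -/
noncomputable def mixedMeasure (I : Set ℝ) (n : ℕ) (t : Fin n → ℝ) (w : Fin n → ℝ) :
    Measure ℝ :=
  (∑ d, ENNReal.ofReal (w d) • Measure.dirac (t d)) + volume.restrict I

/-- In the mixed-measure setting, the Pythagoras identity for the orthogonal decomposition of
`f̃ ∈ L²₀(μ)` into its continuous component `f̃_c = f̃ − c` (with `c = (1/λ(I)) ∫_C f̃ dλ`) and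
its discrete component `f̃_d`:
`∫_I f̃² dμ = ∫_C f̃_c² dλ + Σ_d w_d f̃_d(t_d)² + λ(I) f̃_d(t_{D+1})²`. -/
theorem mixed_L2_pythagoras
    (I : Set ℝ) (hImeas : MeasurableSet I) (hIconn : I.OrdConnected)
    (hI0 : 0 < volume I) (hIfin : volume I < ⊤)
    (n : ℕ) (t : Fin n → ℝ) (htinj : Function.Injective t) (htI : ∀ d, t d ∈ I)
    (w : Fin n → ℝ) (hw : ∀ d, 0 < w d)
    (ft : ℝ → ℝ) (hft : Measurable ft)
    (hsq : Integrable (fun x => (ft x) ^ 2) (mixedMeasure I n t w))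
    (hzero : ∫ x, ft x ∂(mixedMeasure I n t w) = 0)
    (c : ℝ)
    (hc : c = (volume I).toReal⁻¹ * ∫ x in I \ Set.range t, ft x ∂(volume.restrict I)) :
    ∫ x in I, (ft x) ^ 2 ∂(mixedMeasure I n t w) =
      (∫ x in I \ Set.range t, (ft x - c) ^ 2 ∂(volume.restrict I)) +
        ∑ d, w d * (ft (t d)) ^ 2 + (volume I).toReal * c ^ 2 := by
  set ν : Measure ℝ := volume.restrict I with hν
  have hνfin : IsFiniteMeasure ν := ⟨by simpa [hν, Measure.restrict_apply_univ] using hIfin⟩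
  -- range t is a null set for volume
  have hrange0 : volume (Set.range t) = 0 := (Set.finite_range t).measure_zero _
  have hCeq : (volume.restrict I).restrict (I \ Set.range t) = ν := by
    rw [Measure.restrict_restrict (hImeas.diff (Set.finite_range t).measurableSet)]
    have : (I \ Set.range t) ∩ I = I \ Set.range t := by
      ext x; simp (config := {contextual := true}) [Set.mem_diff]
    rw [this, hν]
    refine Measure.restrict_congr_set (MeasureTheory.ae_eq_set.mpr ⟨?_, ?_⟩)
    · simp
    · refine measure_mono_null ?_ hrange0
      intro x hx
      simp only [Set.mem_diff, Set.mem_diff, not_and, not_not] at hx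
      exact hx.2 hx.1
  -- μ = its restriction to I
  have hμI : (mixedMeasure I n t w).restrict I = mixedMeasure I n t w := by
    apply Measure.restrict_eq_self_of_ae_mem
    rw [Filter.eventually_iff, mem_ae_iff]
    have : {x : ℝ | x ∈ I}ᶜ = Iᶜ := rfl
    rw [this, mixedMeasure]
    simp only [Measure.add_apply, Measure.coe_finset_sum, Finset.sum_apply,
      Measure.smul_apply, smul_eq_mul]
    rw [Measure.restrict_apply (MeasurableSet.compl hImeas)]
    have h1 : ∀ d : Fin n, Measure.dirac (t d) Iᶜ = 0 := fun d => by
      rw [Measure.dirac_apply' _ (MeasurableSet.compl hImeas)]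
      simp [htI d]
    simp [h1]
  -- integrability pieces
  have hsq' : Integrable (fun x => (ft x) ^ 2)
      ((∑ d, ENNReal.ofReal (w d) • Measure.dirac (t d)) + ν) := hsq
  have hsqν : Integrable (fun x => (ft x) ^ 2) ν :=
    (integrable_add_measure.mp hsq').2
  have hsqδ : Integrable (fun x => (ft x) ^ 2)
      (∑ d, ENNReal.ofReal (w d) • Measure.dirac (t d)) :=
    (integrable_add_measure.mp hsq').1
  have hftν : Integrable ft ν := by
    have hmem : MemLp ft 2 ν := by
      rw [memLp_two_iff_integrable_sq hft.aestronglyMeasurable]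
      exact hsqν
    exact hmem.integrable (by norm_num)
  -- value of ∫ f dν
  have hintf : ∫ x, ft x ∂ν = c * (volume I).toReal := by
    have h1 : ∫ x in I \ Set.range t, ft x ∂(volume.restrict I) = ∫ x, ft x ∂ν := by
      rw [← hCeq]
    have htoReal : (volume I).toReal ≠ 0 := by
      refine ENNReal.toReal_ne_zero.mpr ⟨hI0.ne', hIfin.ne⟩
    rw [hc, h1]
    field_simp
  -- LHS
  have hLHS : ∫ x in I, (ft x) ^ 2 ∂(mixedMeasure I n t w) =
      (∑ d, w d * (ft (t d)) ^ 2) + ∫ x, (ft x) ^ 2 ∂ν := by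
    rw [hμI, mixedMeasure, integral_add_measure hsqδ hsqν]
    congr 1
    rw [integral_finset_sum_measure]
    · refine Finset.sum_congr rfl fun d _ => ?_
      rw [integral_smul_measure, integral_dirac]
      simp [ENNReal.toReal_ofReal (hw d).le]
    · intro d _
      refine Integrable.smul_measure ?_ ENNReal.ofReal_ne_top
      refine ⟨(hft.pow_const 2).aestronglyMeasurable, ?_⟩
      simp only [HasFiniteIntegral, lintegral_dirac]
      exact ENNReal.coe_lt_top
  -- RHS first term
  have hRHS1 : ∫ x in I \ Set.range t, (ft x - c) ^ 2 ∂(volume.restrict I) =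
      ∫ x, (ft x) ^ 2 ∂ν - (volume I).toReal * c ^ 2 := by
    have h1 : ∫ x in I \ Set.range t, (ft x - c) ^ 2 ∂(volume.restrict I) =
        ∫ x, (ft x - c) ^ 2 ∂ν := by rw [← hCeq]
    rw [h1]
    have hexp : ∀ x, (ft x - c) ^ 2 = (ft x) ^ 2 - 2 * c * ft x + c ^ 2 := by
      intro x; ring
    simp_rw [hexp]
    have hi1 : Integrable (fun x => ft x ^ 2 - 2 * c * ft x) ν :=
      hsqν.sub (hftν.const_mul _)
    rw [integral_add hi1 (integrable_const _),
      integral_sub hsqν (hftν.const_mul _), integral_const_mul, hintf, integral_const,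
      smul_eq_mul]
    have : (ν Set.univ).toReal = (volume I).toReal := by
      simp [hν, Measure.restrict_apply_univ]
    rw [measureReal_def, this]; ring
  rw [hLHS, hRHS1]; ring
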